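/- Let V be a 3-dimensional real vector space with a Lorentzian form and A: V → V a linear operator. If A has at least 4 pairwise non-collinear isotropic eigenvectors, then A is a scalar multiple of the identity. -/

import Mathlib

def IsLorentzForm {V : Type*} [AddCommGroup V] [Module ℝ V] (n : ℕ)
    (B : LinearMap.BilinForm ℝ V) : Prop :=
  ∃ b : Module.Basis (Fin n) ℝ V, ∀ i j, B (b i) (b j) =
    if i = j then (if (i : ℕ) = 0 then (-1 : ℝ) else 1) else 0

section Aux
variable {V : Type*} [AddCommGroup V] [Module ℝ V]

lemma coord_lemma (B : LinearMap.BilinForm ℝ V) (e : Module.Basis (Fin 3) ℝ V)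
    (he : ∀ i j, B (e i) (e j) = if i = j then (if (i:ℕ)=0 then (-1:ℝ) else 1) else 0)
    (u v : V) :
    B u v = -(e.repr u 0 * e.repr v 0) + e.repr u 1 * e.repr v 1 + e.repr u 2 * e.repr v 2 := by
  conv_lhs => rw [← e.sum_repr u, ← e.sum_repr v]
  simp [-Module.Basis.sum_repr, map_sum, LinearMap.sum_apply, Fin.sum_univ_three, he]

lemma iso_pair (B : LinearMap.BilinForm ℝ V) (e : Module.Basis (Fin 3) ℝ V)
    (he : ∀ i j, B (e i) (e j) = if i = j then (if (i:ℕ)=0 then (-1:ℝ) else 1) else 0)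
    (u v : V) (hu : B u u = 0) (hv : B v v = 0)
    (hind : LinearIndependent ℝ ![u, v]) : B u v ≠ 0 := by
  intro huv
  rw [coord_lemma B e he] at hu hv huv
  set u0 := e.repr u 0 with hu0; set u1 := e.repr u 1 with hu1; set u2 := e.repr u 2 with hu2
  set v0 := e.repr v 0 with hv0; set v1 := e.repr v 1 with hv1; set v2 := e.repr v 2 with hv2
  have sq12 : (u1*v2 - u2*v1)^2 = 0 := by
    linear_combination (v1^2+v2^2)*hu + u0^2*hv - (u1*v1+u2*v2+u0*v0)*huv
  have m12 : u1*v2 - u2*v1 = 0 := pow_eq_zero_iff (n := 2) two_ne_zero |>.mp sq12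
  have m01 : u0*v1 - u1*v0 = 0 := by
    have h : (u0*v1 - u1*v0)^2 = (u2*v1 - u1*v2)^2 := by
      linear_combination -v1^2*hu - u1^2*hv + 2*u1*v1*huv
    have h2 : (u0*v1 - u1*v0)^2 = 0 := by rw [h]; nlinarith [m12]
    exact pow_eq_zero_iff (n := 2) two_ne_zero |>.mp h2
  have m02 : u0*v2 - u2*v0 = 0 := by
    have h : (u0*v2 - u2*v0)^2 = (u1*v2 - u2*v1)^2 := by
      linear_combination -v2^2*hu - u2^2*hv + 2*u2*v2*huv
    have h2 : (u0*v2 - u2*v0)^2 = 0 := by rw [h, m12]; ring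
    exact pow_eq_zero_iff (n := 2) two_ne_zero |>.mp h2
  rw [linearIndependent_fin2] at hind
  obtain ⟨hvne, hna⟩ := hind
  simp only [Matrix.cons_val_one, Matrix.head_cons, Matrix.cons_val_zero] at hvne hna
  have hcoord : ∃ i, e.repr v i ≠ 0 := by
    by_contra h
    push_neg at h
    exact hvne (by apply e.ext_elem; intro i; simp [h i])
  obtain ⟨i, hi⟩ := hcoord
  have h3 : ∀ k : Fin 3, k = 0 ∨ k = 1 ∨ k = 2 := by decide
  have key : ∀ j, e.repr u j = (e.repr u i / e.repr v i) * e.repr v j := by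
    intro j
    rw [div_mul_eq_mul_div, eq_div_iff hi]
    rcases h3 i with rfl | rfl | rfl <;> rcases h3 j with rfl | rfl | rfl <;>
      simp only [← hu0, ← hu1, ← hu2, ← hv0, ← hv1, ← hv2] <;>
      try ring1
    case inl.inr.inl => linear_combination -m01
    case inl.inr.inr => linear_combination -m02
    case inr.inl.inl => linear_combination m01
    case inr.inl.inr => linear_combination -m12
    case inr.inr.inl => linear_combination m02
    case inr.inr.inr => linear_combination m12
  exact hna (e.repr u i / e.repr v i) (by
    apply e.ext_elem; intro j
    simp [key j])

/-- Three pairwise non-orthogonal isotropic vectors are linearly independent. -/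
lemma triple_indep (B : LinearMap.BilinForm ℝ V) (hsymm : ∀ u v, B u v = B v u)
    (u v w : V) (hu : B u u = 0) (hv : B v v = 0) (hw : B w w = 0)
    (hab : B u v ≠ 0) (hac : B u w ≠ 0) (hbc : B v w ≠ 0) :
    LinearIndependent ℝ ![u, v, w] := by
  rw [Fintype.linearIndependent_iff]
  intro g hg
  rw [Fin.sum_univ_three] at hg
  simp only [Matrix.cons_val_zero, Matrix.cons_val_one, Matrix.head_cons,
    Matrix.cons_val_two, Matrix.tail_cons] at hg
  have e1 : g 1 * B u v + g 2 * B u w = 0 := by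
    have := congrArg (fun x => B x u) hg
    simp only [map_add, map_smul, LinearMap.add_apply, LinearMap.smul_apply,
      smul_eq_mul, LinearMap.zero_apply, map_zero] at this
    rw [hu, hsymm v u, hsymm w u] at this
    linarith [this]
  have e2 : g 0 * B u v + g 2 * B v w = 0 := by
    have := congrArg (fun x => B x v) hg
    simp only [map_add, map_smul, LinearMap.add_apply, LinearMap.smul_apply,
      smul_eq_mul, LinearMap.zero_apply, map_zero] at this
    rw [hv, hsymm w v] at this
    linarith [this]
  have e3 : g 0 * B u w + g 1 * B v w = 0 := by
    have := congrArg (fun x => B x w) hg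
    simp only [map_add, map_smul, LinearMap.add_apply, LinearMap.smul_apply,
      smul_eq_mul, LinearMap.zero_apply, map_zero] at this
    rw [hw] at this
    linarith [this]
  set a := B u v; set bb := B u w; set c := B v w
  have h2 : g 2 * (2 * bb * c) = 0 := by linear_combination c*e1 + bb*e2 - a*e3
  have h1 : g 1 * (2 * a * c) = 0 := by linear_combination c*e1 - bb*e2 + a*e3
  have h0 : g 0 * (2 * a * bb) = 0 := by linear_combination -c*e1 + bb*e2 + a*e3
  have hg2 : g 2 = 0 :=
    (mul_eq_zero.mp h2).resolve_right (mul_ne_zero (mul_ne_zero two_ne_zero hac) hbc)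
  have hg1 : g 1 = 0 :=
    (mul_eq_zero.mp h1).resolve_right (mul_ne_zero (mul_ne_zero two_ne_zero hab) hbc)
  have hg0 : g 0 = 0 :=
    (mul_eq_zero.mp h0).resolve_right (mul_ne_zero (mul_ne_zero two_ne_zero hab) hac)
  intro i
  have h3 : ∀ k : Fin 3, k = 0 ∨ k = 1 ∨ k = 2 := by decide
  rcases h3 i with rfl | rfl | rfl <;> assumption
end Aux

/-- A linear operator on a 3-dimensional Lorentz space having at least four pairwise
non-collinear isotropic eigenvectors is a scalar multiple of the identity. -/
theorem stmt4 {V : Type*} [AddCommGroup V] [Module ℝ V] [FiniteDimensional ℝ V]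
    (B : LinearMap.BilinForm ℝ V) (hsymm : ∀ u v, B u v = B v u)
    (hL : IsLorentzForm 3 B)
    (A : V →ₗ[ℝ] V)
    (b : Fin 4 → V) (mu : Fin 4 → ℝ)
    (hne : ∀ i, b i ≠ 0)
    (hiso : ∀ i, B (b i) (b i) = 0)
    (heig : ∀ i, A (b i) = mu i • b i)
    (hnc : ∀ i j, i ≠ j → LinearIndependent ℝ ![b i, b j]) :
    ∃ c : ℝ, ∀ v : V, A v = c • v := by
  obtain ⟨e, he⟩ := hL
  have hBo : ∀ i j, i ≠ j → B (b i) (b j) ≠ 0 := fun i j hij =>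
    iso_pair B e he _ _ (hiso i) (hiso j) (hnc i j hij)
  have hli : LinearIndependent ℝ ![b 0, b 1, b 2] :=
    triple_indep B hsymm _ _ _ (hiso 0) (hiso 1) (hiso 2)
      (hBo 0 1 (by decide)) (hBo 0 2 (by decide)) (hBo 1 2 (by decide))
  have hcard : Fintype.card (Fin 3) = Module.finrank ℝ V := by
    rw [Module.finrank_eq_card_basis e]
  let f : Module.Basis (Fin 3) ℝ V := basisOfLinearIndependentOfCardEqFinrank hli hcard
  have hf : ∀ i : Fin 3, f i = ![b 0, b 1, b 2] i := fun i => by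
    simp [f, coe_basisOfLinearIndependentOfCardEqFinrank]
  have hf0 : f 0 = b 0 := hf 0
  have hf1 : f 1 = b 1 := hf 1
  have hf2 : f 2 = b 2 := hf 2
  set α0 := f.repr (b 3) 0 with hα0
  set α1 := f.repr (b 3) 1 with hα1
  set α2 := f.repr (b 3) 2 with hα2
  have hdec : b 3 = α0 • b 0 + α1 • b 1 + α2 • b 2 := by
    conv_lhs => rw [← f.sum_repr (b 3)]
    rw [Fin.sum_univ_three, hf0, hf1, hf2]
  -- b 3 cannot lie in the span of two of the others
  have hnz : ∀ (j k : Fin 4) (β γ : ℝ), j ≠ k → (j:ℕ) < 3 → (k:ℕ) < 3 →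
      b 3 = β • b j + γ • b k → False := by
    intro j k β γ hjk hj hk hdec'
    have hBjk := hBo j k hjk
    have hzero : 2 * (β * γ) * B (b j) (b k) = 0 := by
      have h0 := hiso 3
      rw [hdec'] at h0
      simp only [map_add, map_smul, LinearMap.add_apply, LinearMap.smul_apply,
        smul_eq_mul] at h0
      rw [hiso j, hiso k, hsymm (b k) (b j)] at h0
      linarith
    have hβγ : β * γ = 0 := by
      rcases mul_eq_zero.mp hzero with h | h
      · rcases mul_eq_zero.mp h with h' | h'
        · norm_num at h'
        · exact h'
      · exact absurd h hBjk
    rcases mul_eq_zero.mp hβγ with h | h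
    · subst h
      rw [zero_smul, zero_add] at hdec'
      have hind := hnc 3 k (Fin.ne_of_val_ne (by omega))
      rw [linearIndependent_fin2] at hind
      exact hind.2 γ (by simpa using hdec'.symm)
    · subst h
      rw [zero_smul, add_zero] at hdec'
      have hind := hnc 3 j (Fin.ne_of_val_ne (by omega))
      rw [linearIndependent_fin2] at hind
      exact hind.2 β (by simpa using hdec'.symm)
  have hA0 : α0 ≠ 0 := fun h =>
    hnz 1 2 α1 α2 (by decide) (by norm_num) (by norm_num)
      (by rw [hdec, h]; module)
  have hA1 : α1 ≠ 0 := fun h =>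
    hnz 0 2 α0 α2 (by decide) (by norm_num) (by norm_num)
      (by rw [hdec, h]; module)
  have hA2 : α2 ≠ 0 := fun h =>
    hnz 0 1 α0 α1 (by decide) (by norm_num) (by norm_num)
      (by rw [hdec, h]; module)
  -- eigenvalue comparison
  have hAe : A (b 3) = (α0 * mu 0) • b 0 + (α1 * mu 1) • b 1 + (α2 * mu 2) • b 2 := by
    rw [hdec]
    simp only [map_add, map_smul, heig, smul_smul]
    try module
  have hAe2 : A (b 3) = (mu 3 * α0) • b 0 + (mu 3 * α1) • b 1 + (mu 3 * α2) • b 2 := by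
    rw [heig 3, hdec]
    simp only [smul_add, smul_smul]
  have hz : (α0 * (mu 0 - mu 3)) • b 0 + (α1 * (mu 1 - mu 3)) • b 1
      + (α2 * (mu 2 - mu 3)) • b 2 = 0 := by
    have h := hAe.symm.trans hAe2
    linear_combination (norm := module) h
  have key := Fintype.linearIndependent_iff.mp hli
    ![α0 * (mu 0 - mu 3), α1 * (mu 1 - mu 3), α2 * (mu 2 - mu 3)]
    (by rw [Fin.sum_univ_three]; simpa using hz)
  have hm0 : mu 0 = mu 3 := by
    have h := key 0
    simp only [Matrix.cons_val_zero] at h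
    have := (mul_eq_zero.mp h).resolve_left hA0
    linarith
  have hm1 : mu 1 = mu 3 := by
    have h := key 1
    simp only [Matrix.cons_val_one, Matrix.head_cons] at h
    have := (mul_eq_zero.mp h).resolve_left hA1
    linarith
  have hm2 : mu 2 = mu 3 := by
    have h := key 2
    simp only [Matrix.cons_val_two, Matrix.tail_cons, Matrix.head_cons] at h
    have := (mul_eq_zero.mp h).resolve_left hA2
    linarith
  refine ⟨mu 3, fun v => ?_⟩
  have hv : v = f.repr v 0 • b 0 + f.repr v 1 • b 1 + f.repr v 2 • b 2 := by
    conv_lhs => rw [← f.sum_repr v]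
    rw [Fin.sum_univ_three, hf0, hf1, hf2]
  rw [hv]
  simp only [map_add, map_smul, heig, hm0, hm1, hm2, smul_add, smul_smul]
  module
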